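/- For k = 3 and every integer d with 3 ≤ d, we have cos(π/4) + (√(d/(d-1)) - 1)·(1/2)·sin(π/4)·sin(π/2) > (3-1)/(3 - 1/d), i.e., the explicit-vector relative expectation bound (√2/2)(1 + (√(d/(d-1))-1)/2) exceeds 2/(3 - 1/d). -/

import Mathlib

open Real

theorem explicit_vector_gt_lyons_k3 (d : ℕ) (hd : 3 ≤ d) :
    Real.cos (π / 4) +
        (Real.sqrt ((d : ℝ) / ((d : ℝ) - 1)) - 1) * (1 / 2) * Real.sin (π / 4) * Real.sin (π / 2)
      > (3 - 1) / (3 - 1 / (d : ℝ)) := by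
  have hx : (3 : ℝ) ≤ (d : ℝ) := by exact_mod_cast hd
  set x : ℝ := (d : ℝ) with hxdef
  have hx0 : 0 < x := by linarith
  have hx1 : 0 < x - 1 := by linarith
  have h2 : (1.41 : ℝ) ≤ Real.sqrt 2 := by
    rw [show (1.41 : ℝ) = Real.sqrt (1.41 ^ 2) by rw [Real.sqrt_sq (by norm_num)]]
    apply Real.sqrt_le_sqrt; norm_num
  have hs : 1 + 1 / (2 * x) ≤ Real.sqrt (x / (x - 1)) := by
    rw [Real.le_sqrt (by positivity) (by positivity)]
    have h1 : 1 + 1 / (2 * x) = (2 * x + 1) / (2 * x) := by field_simp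
    rw [h1, div_pow, div_le_div_iff₀ (by positivity) hx1]
    nlinarith [sq_nonneg x, mul_pos hx0 hx1]
  have hrhs : (3 : ℝ) - 1 / x > 0 := by
    have : 1 / x ≤ 1 / 3 := by
      apply div_le_div_of_nonneg_left <;> linarith
    linarith
  rw [Real.cos_pi_div_four, Real.sin_pi_div_four, Real.sin_pi_div_two]
  have h1x : (1:ℝ) / (2 * x) > 0 := by positivity
  have hexp : Real.sqrt 2 / 2 + (Real.sqrt (x / (x - 1)) - 1) * (1 / 2) * (Real.sqrt 2 / 2) * 1
      ≥ Real.sqrt 2 / 2 + (1 / (2 * x)) * (1 / 2) * (Real.sqrt 2 / 2) := by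
    have hs2 : (0:ℝ) < Real.sqrt 2 := by linarith
    nlinarith
  have hfin : Real.sqrt 2 / 2 + (1 / (2 * x)) * (1 / 2) * (Real.sqrt 2 / 2) > 2 / (3 - 1 / x) := by
    rw [gt_iff_lt, div_lt_iff₀ hrhs]
    have e : (Real.sqrt 2 / 2 + 1 / (2 * x) * (1 / 2) * (Real.sqrt 2 / 2)) * (3 - 1 / x) * (8 * x ^ 2)
        = Real.sqrt 2 * (12 * x ^ 2 - x - 1) := by
      field_simp
      ring
    have h8 : (0:ℝ) < 8 * x ^ 2 := by positivity
    have hpos : (0:ℝ) ≤ 12 * x ^ 2 - x - 1 := by nlinarith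
    have hgt : 2 * (8 * x ^ 2) < Real.sqrt 2 * (12 * x ^ 2 - x - 1) := by
      nlinarith [mul_le_mul_of_nonneg_right h2 hpos]
    have hgt2 : 2 * (8 * x ^ 2) <
        (Real.sqrt 2 / 2 + 1 / (2 * x) * (1 / 2) * (Real.sqrt 2 / 2)) * (3 - 1 / x) * (8 * x ^ 2) := by
      rw [e]; exact hgt
    exact (mul_lt_mul_iff_of_pos_right h8).mp hgt2
  have h31 : ((3:ℝ) - 1) = 2 := by norm_num
  rw [h31]
  linarith [hexp, hfin]
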